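/- For the commutative algebra A = ℤ[e_{ij} : 1≤i<j≤n]/(e_{ij}², e_{ij}e_{ik} − e_{ij}e_{jk} + e_{ik}e_{jk}), the monomial m = e_{12}e_{13}⋯e_{1n} is nonzero in A. -/

import Mathlib

open MvPolynomial

/-- Index type for the generators `e_{ij}`, `1 ≤ i < j ≤ n`. -/
abbrev PairIdx (n : ℕ) := {p : Fin n × Fin n // p.1 < p.2}

/-- The relations of `H^*(C_n(ℝ³); ℤ)`: the squares `e_{ij}²` and the three-term
relations `e_{ij} e_{ik} - e_{ij} e_{jk} + e_{ik} e_{jk}` for `i < j < k`. -/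
def configRels (n : ℕ) : Set (MvPolynomial (PairIdx n) ℤ) :=
  {f | (∃ p : PairIdx n, f = X p ^ 2) ∨
    ∃ (i j k : Fin n) (hij : i < j) (hjk : j < k),
      f = X ⟨(i, j), hij⟩ * X ⟨(i, k), hij.trans hjk⟩
        - X ⟨(i, j), hij⟩ * X ⟨(j, k), hjk⟩
        + X ⟨(i, k), hij.trans hjk⟩ * X ⟨(j, k), hjk⟩}

/-- The algebra `A = ℤ[e_{ij}]/I`, i.e. `H^*(C_n(ℝ³); ℤ)` (generators in degree 2,
hence commutative). -/
abbrev ConfigAlg (n : ℕ) := MvPolynomial (PairIdx n) ℤ ⧸ Ideal.span (configRels n)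

/-- The generator `e_{ij}` in `ConfigAlg n`. -/
noncomputable def eGen {n : ℕ} (p : PairIdx n) : ConfigAlg n :=
  Ideal.Quotient.mk _ (X p)

/-- `e_{1i}` (with the convention `e_{11} = 1` for the dummy index), for `0 < n`. -/
noncomputable def eOne (n : ℕ) (hn : 0 < n) (i : Fin n) : ConfigAlg n :=
  if h : (⟨0, hn⟩ : Fin n) < i then eGen ⟨(⟨0, hn⟩, i), h⟩ else 1

/-- The monomial `m = e_{12} e_{13} ⋯ e_{1n}`. -/
noncomputable def mMonomial (n : ℕ) (hn : 0 < n) : ConfigAlg n :=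
  ∏ i ∈ Finset.univ.erase (⟨0, hn⟩ : Fin n), eOne n hn i

/-- The ideal of squares in `ℤ[x_1,…,x_n]`. -/
noncomputable def squareIdeal (n : ℕ) : Ideal (MvPolynomial (Fin n) ℤ) :=
  Ideal.span ((fun s => monomial s (1 : ℤ)) ''
    (Set.range fun i : Fin n => Finsupp.single i 2))

lemma X_sq_mem_squareIdeal {n : ℕ} (i : Fin n) :
    (X i : MvPolynomial (Fin n) ℤ) ^ 2 ∈ squareIdeal n := by
  rw [X_pow_eq_monomial]
  exact Ideal.subset_span ⟨Finsupp.single i 2, ⟨i, rfl⟩, rfl⟩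

/-- The ring hom `A → ℤ[x]/(x_i²)` sending `e_{ij} ↦ x_j`. -/
noncomputable def squish (n : ℕ) : ConfigAlg n →+*
    (MvPolynomial (Fin n) ℤ ⧸ squareIdeal n) :=
  Ideal.Quotient.lift _
    ((Ideal.Quotient.mk (squareIdeal n)).comp
      (rename (fun p : PairIdx n => p.1.2)).toRingHom)
    (by
      intro a ha
      refine RingHom.mem_ker.mp (Ideal.span_le.mpr ?_ ha)
      rintro f (⟨p, rfl⟩ | ⟨i, j, k, hij, hjk, rfl⟩) <;>
        simp only [SetLike.mem_coe, RingHom.mem_ker, RingHom.comp_apply,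
          AlgHom.toRingHom_eq_coe, RingHom.coe_coe,
          Ideal.Quotient.eq_zero_iff_mem]
      · rw [map_pow, rename_X]
        exact X_sq_mem_squareIdeal _
      · simp only [map_add, map_sub, map_mul, rename_X]
        have h2 : (X j : MvPolynomial (Fin n) ℤ) * X k - X j * X k + X k * X k
            = X k ^ 2 := by ring
        rw [h2]
        exact X_sq_mem_squareIdeal _)

lemma squish_eGen {n : ℕ} (p : PairIdx n) :
    squish n (eGen p) = Ideal.Quotient.mk _ (X p.1.2) := by
  simp [squish, eGen]

lemma prod_X_finset {n : ℕ} (s : Finset (Fin n)) :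
    (∏ i ∈ s, (X i : MvPolynomial (Fin n) ℤ))
      = monomial (∑ i ∈ s, Finsupp.single i 1) 1 := by
  classical
  induction s using Finset.induction_on with
  | empty => simp
  | insert _ _ hx ih =>
    rw [Finset.prod_insert hx, Finset.sum_insert hx, ih, X,
      monomial_mul, one_mul]

lemma prod_X_not_mem {n : ℕ} (s : Finset (Fin n)) :
    (∏ i ∈ s, (X i : MvPolynomial (Fin n) ℤ)) ∉ squareIdeal n := by
  classical
  rw [prod_X_finset, squareIdeal]
  intro h
  rw [mem_ideal_span_monomial_image] at h
  set d : Fin n →₀ ℕ := ∑ i ∈ s, Finsupp.single i 1 with hd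
  have hsupp : d ∈ (monomial d (1 : ℤ)).support := by
    rw [mem_support_iff, coeff_monomial, if_pos rfl]; norm_num
  obtain ⟨si, ⟨i, rfl⟩, hle⟩ := h d hsupp
  have h1 : (2 : ℕ) ≤ d i := by
    have := hle i
    simpa [Finsupp.single_apply] using this
  have h2 : d i ≤ 1 := by
    rw [hd, Finsupp.finset_sum_apply]
    have : ∀ j ∈ s, (Finsupp.single j 1 : Fin n →₀ ℕ) i
        = if j = i then 1 else 0 := by
      intro j _; simp [Finsupp.single_apply]
    rw [Finset.sum_congr rfl this, Finset.sum_ite_eq' s i (fun _ => 1)]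
    split <;> omega
  omega

/-- the monomial `m = e_{12} e_{13} ⋯ e_{1n}` is nonzero in
`A = ℤ[e_{ij}]/(e_{ij}², e_{ij}e_{ik} - e_{ij}e_{jk} + e_{ik}e_{jk})`. -/
theorem mMonomial_ne_zero (n : ℕ) (hn : 2 ≤ n) :
    mMonomial n (by omega) ≠ 0 := by
  intro h0
  have hpos : 0 < n := by omega
  have key : squish n (mMonomial n hpos)
      = Ideal.Quotient.mk _ (∏ i ∈ Finset.univ.erase (⟨0, hpos⟩ : Fin n),
          (X i : MvPolynomial (Fin n) ℤ)) := by
    rw [mMonomial, map_prod, map_prod]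
    refine Finset.prod_congr rfl fun i hi => ?_
    have hlt : (⟨0, hpos⟩ : Fin n) < i := by
      rcases Finset.mem_erase.mp hi with ⟨hne, -⟩
      refine lt_of_le_of_ne (Fin.mk_le_mk.mpr (Nat.zero_le _)) (Ne.symm hne)
    rw [eOne, dif_pos hlt, squish_eGen]
  rw [h0, map_zero] at key
  have := prod_X_not_mem (n := n) (Finset.univ.erase (⟨0, hpos⟩ : Fin n))
  exact this (Ideal.Quotient.eq_zero_iff_mem.mp key.symm)
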